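/- There exists δ > 0 such that for every sequence (P_m)_{m≥1} with P_m = P⁰ for m odd and P_m ∈ {P⁰, P¹} for m even, and for every m ≥ 0: the closed real interval [−1,1] (viewed inside ℂ) is contained in 𝒦_m, and the discs D(0,δ) and D(−1,δ) are contained in the interior of 𝒦_m. -/

import Mathlib

open Filter

/-- `P⁰(z) = z² − 1`. -/
def P0 : ℂ → ℂ := fun z => z ^ 2 - 1

/-- `P¹(z) = z³`. -/
def P1 : ℂ → ℂ := fun z => z ^ 3

/-- `Qcomp P m n z` is the value at `z` of the composition
`Q_{m,n} = P_n ∘ ⋯ ∘ P_{m+1}` (with `Q_{m,m} = id`). -/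
def Qcomp (P : ℕ → ℂ → ℂ) (m n : ℕ) (z : ℂ) : ℂ :=
  (List.range (n - m)).foldl (fun w k => P (m + k + 1) w) z

/-- Sequences with `P_m = P⁰` for odd `m` and `P_m ∈ {P⁰, P¹}` for even `m`. -/
def IsAdmissibleSeq (P : ℕ → ℂ → ℂ) : Prop :=
  ∀ m, 1 ≤ m → (Odd m → P m = P0) ∧ (Even m → P m = P0 ∨ P m = P1)

/-- The `m`-th iterated filled Julia set. -/
def filledJulia (P : ℕ → ℂ → ℂ) (m : ℕ) : Set ℂ :=
  {z | ∃ C : ℝ, ∀ n, m ≤ n → ‖Qcomp P m n z‖ ≤ C}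

lemma Qcomp_self (P : ℕ → ℂ → ℂ) (m : ℕ) (z : ℂ) : Qcomp P m m z = z := by
  simp [Qcomp]

lemma Qcomp_succ (P : ℕ → ℂ → ℂ) {m n : ℕ} (h : m ≤ n) (z : ℂ) :
    Qcomp P m (n+1) z = P (n+1) (Qcomp P m n z) := by
  have h1 : n + 1 - m = (n - m) + 1 := by omega
  have h2 : m + (n - m) + 1 = n + 1 := by omega
  simp [Qcomp, h1, List.range_succ, h2]

/-- The key invariant: close to the superattracting 2-cycle `{0, -1}` of `P⁰`,
with a parity-dependent radius near `-1`. -/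
def Inv' (n : ℕ) (w : ℂ) : Prop :=
  ‖w‖ ≤ 1/10 ∨ ‖w+1‖ ≤ (if Even n then 1/25 else 1/100)

lemma abs_le_of_near (w : ℂ) : ‖w‖ ≤ ‖w+1‖ + 1 := by
  have := norm_add_le (w+1) (-1)
  simpa using this

lemma abs_sub_one_le (w : ℂ) : ‖w-1‖ ≤ ‖w+1‖ + 2 := by
  have := norm_add_le (w+1) (-2)
  have e : (w+1) + (-2) = w - 1 := by ring
  rw [e] at this
  simpa using this

lemma step0_near0 {w : ℂ} (h : ‖w‖ ≤ 1/10) :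
    ‖P0 w + 1‖ ≤ 1/100 := by
  have e : P0 w + 1 = w^2 := by simp [P0]
  rw [e, norm_pow]
  nlinarith [norm_nonneg w]

lemma step0_near1 {w : ℂ} {r : ℝ} (hr : 0 ≤ r) (h : ‖w+1‖ ≤ r) :
    ‖P0 w‖ ≤ r * (r + 2) := by
  have e : P0 w = (w+1) * (w-1) := by simp [P0]; ring
  rw [e, norm_mul]
  have h2 := abs_sub_one_le w
  have h3 := norm_nonneg (w+1)
  have h4 := norm_nonneg (w-1)
  nlinarith

lemma step1_near0 {w : ℂ} (h : ‖w‖ ≤ 1/10) :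
    ‖P1 w‖ ≤ 1/10 := by
  have e : ‖P1 w‖ = (‖w‖)^3 := by simp [P1, norm_pow]
  rw [e]
  have h0 := norm_nonneg w
  calc (‖w‖)^3 ≤ (1/10)^3 := pow_le_pow_left₀ h0 h 3
    _ ≤ 1/10 := by norm_num

lemma step1_near1 {w : ℂ} (h : ‖w+1‖ ≤ 1/100) :
    ‖P1 w + 1‖ ≤ 1/25 := by
  have e : P1 w + 1 = (w+1) * (w^2 - w + 1) := by simp [P1]; ring
  rw [e, norm_mul]
  have h2 : ‖w^2 - w + 1‖ ≤ (‖w‖)^2 + ‖w‖ + 1 := by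
    calc ‖w^2 - w + 1‖ ≤ ‖w^2 - w‖ + ‖(1:ℂ)‖ :=
          norm_add_le _ _
      _ ≤ ‖w^2‖ + ‖w‖ + 1 := by
          have t : ‖w^2 - w‖ ≤ ‖w^2‖ + ‖w‖ := by
            have := norm_add_le (w^2) (-w)
            simpa [sub_eq_add_neg] using this
          simp only [norm_one]
          linarith
      _ = (‖w‖)^2 + ‖w‖ + 1 := by rw [norm_pow]
  have h3 := abs_le_of_near w
  have h4 := norm_nonneg (w+1)
  have h5 := norm_nonneg w
  nlinarith

lemma Inv'_step {P : ℕ → ℂ → ℂ} (hP : IsAdmissibleSeq P) (n : ℕ) {w : ℂ}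
    (h : Inv' n w) : Inv' (n+1) (P (n+1) w) := by
  obtain ⟨h1, h2⟩ := hP (n+1) (by omega)
  rcases Nat.even_or_odd n with he | ho
  · -- n even, hence n+1 odd and P (n+1) = P0
    have hodd : Odd (n+1) := Even.add_one he
    have hne : ¬ Even (n+1) := by simpa using hodd
    rw [h1 hodd]
    rcases h with hw | hw
    · right
      rw [if_neg hne]
      exact step0_near0 hw
    · left
      rw [if_pos he] at hw
      have := step0_near1 (by norm_num) hw
      linarith
  · -- n odd, hence n+1 even and P (n+1) ∈ {P0, P1}
    have heven : Even (n+1) := Odd.add_one ho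
    have hne : ¬ Even n := by simpa using ho
    simp only [Inv', if_neg hne] at h
    rcases h2 heven with hp | hp <;> rw [hp]
    · rcases h with hw | hw
      · right
        rw [if_pos heven]
        have := step0_near0 hw
        linarith
      · left
        have := step0_near1 (by norm_num : (0:ℝ) ≤ 1/100) hw
        linarith
    · rcases h with hw | hw
      · left
        exact step1_near0 hw
      · right
        rw [if_pos heven]
        exact step1_near1 hw

lemma Inv'_abs_le {n : ℕ} {w : ℂ} (h : Inv' n w) : ‖w‖ ≤ 2 := by
  rcases h with hw | hw
  · linarith
  · have h1 : ‖w+1‖ ≤ 1/25 := by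
      split at hw <;> linarith
    have := abs_le_of_near w
    linarith

lemma Inv'_all {P : ℕ → ℂ → ℂ} (hP : IsAdmissibleSeq P) (m : ℕ) {z : ℂ}
    (hz : Inv' m z) : ∀ n, m ≤ n → Inv' n (Qcomp P m n z) := by
  intro n hn
  induction n, hn using Nat.le_induction with
  | base => rw [Qcomp_self]; exact hz
  | succ n hmn ih => rw [Qcomp_succ P hmn]; exact Inv'_step hP n ih

lemma Inv'_mem_filledJulia {P : ℕ → ℂ → ℂ} (hP : IsAdmissibleSeq P) {m : ℕ} {z : ℂ}
    (hz : Inv' m z) : z ∈ filledJulia P m :=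
  ⟨2, fun n hn => Inv'_abs_le (Inv'_all hP m hz n hn)⟩

lemma interval_all {P : ℕ → ℂ → ℂ} (hP : IsAdmissibleSeq P) (m : ℕ) {x : ℝ}
    (hx : x ∈ Set.Icc (-1:ℝ) 1) :
    ∀ n, m ≤ n → ∃ y : ℝ, y ∈ Set.Icc (-1:ℝ) 1 ∧ Qcomp P m (n) (x : ℂ) = (y : ℂ) := by
  intro n hn
  induction n, hn using Nat.le_induction with
  | base => exact ⟨x, hx, Qcomp_self P m (x : ℂ)⟩
  | succ n hmn ih =>
    obtain ⟨y, hy, he⟩ := ih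
    rw [Qcomp_succ P hmn, he]
    obtain ⟨h1, h2⟩ := hP (n+1) (by omega)
    have hcase : P (n+1) = P0 ∨ P (n+1) = P1 := by
      rcases Nat.even_or_odd (n+1) with he' | ho'
      · exact h2 he'
      · exact Or.inl (h1 ho')
    obtain ⟨hy1, hy2⟩ := hy
    have hab : |y^3| ≤ 1 := by
      rw [abs_pow]; exact pow_le_one₀ (abs_nonneg y) (abs_le.mpr ⟨hy1, hy2⟩)
    obtain ⟨hc1, hc2⟩ := abs_le.mp hab
    rcases hcase with hp | hp
    · refine ⟨y^2 - 1, ⟨by nlinarith, by nlinarith⟩, ?_⟩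
      rw [hp]; unfold P0; push_cast; ring
    · refine ⟨y^3, ⟨hc1, hc2⟩, ?_⟩
      rw [hp]; unfold P1; push_cast; ring

/-- There is a uniform `δ > 0` such that for every admissible sequence and every
`m ≥ 0`, the real interval `[−1,1] ⊂ ℂ` lies in `𝒦_m` and the discs
`D(0,δ)`, `D(−1,δ)` lie in the interior of `𝒦_m`. -/
theorem interval_and_discs_in_filledJulia :
    ∃ δ : ℝ, 0 < δ ∧
      ∀ P : ℕ → ℂ → ℂ, IsAdmissibleSeq P →
        ∀ m : ℕ,
          (fun x : ℝ => (x : ℂ)) '' Set.Icc (-1 : ℝ) 1 ⊆ filledJulia P m ∧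
          Metric.ball (0 : ℂ) δ ⊆ interior (filledJulia P m) ∧
          Metric.ball (-1 : ℂ) δ ⊆ interior (filledJulia P m) := by
  refine ⟨1/100, by norm_num, fun P hP m => ⟨?_, ?_, ?_⟩⟩
  · rintro z ⟨x, hx, rfl⟩
    refine ⟨1, fun n hn => ?_⟩
    obtain ⟨y, ⟨hy1, hy2⟩, he⟩ := interval_all hP m hx n hn
    rw [he, Complex.norm_real, Real.norm_eq_abs]
    exact abs_le.mpr ⟨hy1, hy2⟩
  · refine interior_maximal (fun z hz => ?_) Metric.isOpen_ball
    rw [Metric.mem_ball, dist_zero_right] at hz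
    exact Inv'_mem_filledJulia hP (Or.inl (by linarith))
  · refine interior_maximal (fun z hz => ?_) Metric.isOpen_ball
    rw [Metric.mem_ball, Complex.dist_eq] at hz
    have hz' : ‖z + 1‖ < 1/100 := by
      have e : z - (-1) = z + 1 := by ring
      rwa [e] at hz
    refine Inv'_mem_filledJulia hP (Or.inr ?_)
    split <;> linarith
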